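/- Let d^1, ..., d^m and s^1, ..., s^m be vectors in a real inner product space. Let σ be an operator mapping (d^1,...,d^m) to (d'^1,...,d'^m) such that (i) the mean is invariant: (1/m) Σ d'^i = (1/m) Σ d^i =: d̄, and (ii) (1/m) Σ ‖d'^i − d̄‖² ≤ Δ. Let s'^i = s̄ := (1/m) Σ s^j for all i (full averaging of the s-configuration). Then (1/m) Σ_{i=1}^m ‖d'^i − s'^i‖² ≤ (1/m) Σ_{i=1}^m ‖d^i − s^i‖² + Δ. -/

import Mathlib

theorem sync_lemma
    {E : Type*} [NormedAddCommGroup E] [InnerProductSpace ℝ E]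
    (m : ℕ) (hm : 0 < m) (Δ : ℝ) (hΔ : 0 < Δ)
    (d d' s s' : Fin m → E)
    (hmean : (1 / (m : ℝ)) • ∑ i, d' i = (1 / (m : ℝ)) • ∑ i, d i)
    (hdiv : (1 / (m : ℝ)) * ∑ i, ‖d' i - (1 / (m : ℝ)) • ∑ j, d j‖ ^ 2 ≤ Δ)
    (hs : ∀ i, s' i = (1 / (m : ℝ)) • ∑ j, s j) :
    (1 / (m : ℝ)) * ∑ i, ‖d' i - s' i‖ ^ 2
      ≤ (1 / (m : ℝ)) * ∑ i, ‖d i - s i‖ ^ 2 + Δ := by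
  have hm0 : (m : ℝ) ≠ 0 := Nat.cast_ne_zero.mpr hm.ne'
  have hmpos : (0:ℝ) < m := Nat.cast_pos.mpr hm
  set c : ℝ := 1 / (m : ℝ) with hc
  have hcpos : 0 < c := by positivity
  set db : E := c • ∑ i, d i with hdb
  set sb : E := c • ∑ j, s j with hsb
  have hsum : ∑ i, d' i = ∑ i, d i := by
    have := hmean
    exact smul_right_injective E (by positivity : c ≠ 0) this
  have hzero : ∑ i, (d' i - db) = 0 := by
    rw [Finset.sum_sub_distrib, hsum, Finset.sum_const, Finset.card_univ,
      Fintype.card_fin, hdb, sub_eq_zero, ← Nat.cast_smul_eq_nsmul ℝ, smul_smul]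
    rw [hc, mul_one_div, div_self hm0, one_smul]
  have expand : ∀ i, ‖d' i - s' i‖ ^ 2
      = ‖d' i - db‖ ^ 2 + 2 * inner ℝ (d' i - db) (db - sb) + ‖db - sb‖ ^ 2 := by
    intro i
    rw [hs i]
    have h1 : d' i - sb = (d' i - db) + (db - sb) := by abel
    rw [h1, @norm_add_sq_real]
  have hsum2 : ∑ i, ‖d' i - s' i‖ ^ 2
      = (∑ i, ‖d' i - db‖ ^ 2) + (m : ℝ) * ‖db - sb‖ ^ 2 := by
    calc ∑ i, ‖d' i - s' i‖ ^ 2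
        = ∑ i, (‖d' i - db‖ ^ 2 + 2 * inner ℝ (d' i - db) (db - sb) + ‖db - sb‖ ^ 2) := by
          exact Finset.sum_congr rfl fun i _ => expand i
      _ = (∑ i, ‖d' i - db‖ ^ 2) + 2 * inner ℝ (∑ i, (d' i - db)) (db - sb)
            + (m : ℝ) * ‖db - sb‖ ^ 2 := by
          rw [Finset.sum_add_distrib, Finset.sum_add_distrib, Finset.sum_const,
            Finset.card_univ, Fintype.card_fin, ← Finset.mul_sum, ← sum_inner]
          push_cast
          ring
      _ = (∑ i, ‖d' i - db‖ ^ 2) + (m : ℝ) * ‖db - sb‖ ^ 2 := by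
          rw [hzero, inner_zero_left]
          ring
  -- Jensen: ‖db - sb‖^2 ≤ c * ∑ ‖d i - s i‖^2
  have hjensen : ‖db - sb‖ ^ 2 ≤ c * ∑ i, ‖d i - s i‖ ^ 2 := by
    have h1 : db - sb = c • ∑ i, (d i - s i) := by
      rw [hdb, hsb, Finset.sum_sub_distrib, smul_sub]
    have h2 : ‖db - sb‖ ≤ c * ∑ i, ‖d i - s i‖ := by
      rw [h1, norm_smul, Real.norm_eq_abs, abs_of_pos hcpos]
      exact mul_le_mul_of_nonneg_left (norm_sum_le _ _) hcpos.le
    have h3 : (∑ i, ‖d i - s i‖) ^ 2 ≤ (m : ℝ) * ∑ i, ‖d i - s i‖ ^ 2 := by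
      have := sq_sum_le_card_mul_sum_sq (s := (Finset.univ : Finset (Fin m)))
        (f := fun i => ‖d i - s i‖)
      simpa using this
    calc ‖db - sb‖ ^ 2 ≤ (c * ∑ i, ‖d i - s i‖) ^ 2 := by
          apply sq_le_sq' _ h2
          nlinarith [norm_nonneg (db - sb)]
      _ = c ^ 2 * (∑ i, ‖d i - s i‖) ^ 2 := by ring
      _ ≤ c ^ 2 * ((m : ℝ) * ∑ i, ‖d i - s i‖ ^ 2) := by
          exact mul_le_mul_of_nonneg_left h3 (by positivity)
      _ = c * ∑ i, ‖d i - s i‖ ^ 2 := by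
          rw [hc]; field_simp
  have key : c * ∑ i, ‖d' i - s' i‖ ^ 2
      = c * (∑ i, ‖d' i - db‖ ^ 2) + ‖db - sb‖ ^ 2 := by
    rw [hsum2]
    rw [hc]
    field_simp
  rw [key]
  have hdiv' : c * (∑ i, ‖d' i - db‖ ^ 2) ≤ Δ := hdiv
  linarith
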